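/- Assume the feasible set F_P is nonempty. Let x* ∈ F_κ attain sup_{x ∈ F_κ} S(x). Suppose γ : J → ℝ with γ_j ≥ 0 for all j is such that A_γ = Σ_j γ_j A_j is positive definite and f_γ(x*) = Σ_j γ_j f_j(x*) = 0. Then f_j(x*) ≥ 0 for every j ∈ J; that is, x* is feasible. -/

import Mathlib

open Matrix ComplexOrder

private lemma quad_conj {n : ℕ} {M : Matrix (Fin n) (Fin n) ℂ} (hM : M.IsHermitian)
    (x : Fin n → ℂ) : star (star x ⬝ᵥ M *ᵥ x) = star x ⬝ᵥ M *ᵥ x := by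
  calc star (star x ⬝ᵥ M *ᵥ x) = star (M *ᵥ x) ⬝ᵥ star (star x) := by
        rw [star_dotProduct_star]
    _ = star x ⬝ᵥ M *ᵥ x := by
        rw [star_star, star_mulVec, hM.eq, ← dotProduct_mulVec]

private lemma quad_im {n : ℕ} {M : Matrix (Fin n) (Fin n) ℂ} (hM : M.IsHermitian)
    (x : Fin n → ℂ) : (star x ⬝ᵥ M *ᵥ x).im = 0 := by
  have := quad_conj hM x
  rw [Complex.star_def, Complex.conj_eq_iff_im] at this
  exact this

private lemma posSemidef_of_re {n : ℕ} {M : Matrix (Fin n) (Fin n) ℂ} (hM : M.IsHermitian)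
    (h : ∀ x, 0 ≤ (star x ⬝ᵥ M *ᵥ x).re) : M.PosSemidef := by
  refine .of_dotProduct_mulVec_nonneg hM fun x => ?_
  rw [Complex.nonneg_iff]
  exact ⟨h x, (quad_im hM x).symm⟩

private lemma psd_add {n : ℕ} {M N : Matrix (Fin n) (Fin n) ℂ}
    (hM : M.PosSemidef) (hN : N.PosSemidef) : (M + N).PosSemidef :=
  .of_dotProduct_mulVec_nonneg (hM.1.add hN.1) fun x => by
    rw [add_mulVec, dotProduct_add]
    exact add_nonneg (hM.dotProduct_mulVec_nonneg x) (hN.dotProduct_mulVec_nonneg x)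

private lemma herm_smul {n : ℕ} (a : ℝ) {M : Matrix (Fin n) (Fin n) ℂ}
    (hM : M.IsHermitian) : (a • M).IsHermitian := by
  unfold Matrix.IsHermitian
  rw [conjTranspose_smul, star_trivial, hM.eq]

private lemma psd_smul {n : ℕ} {a : ℝ} (ha : 0 ≤ a) {M : Matrix (Fin n) (Fin n) ℂ}
    (hM : M.PosSemidef) : (a • M).PosSemidef := by
  refine .of_dotProduct_mulVec_nonneg (herm_smul a hM.1) fun x => ?_
  rw [smul_mulVec, dotProduct_smul, Complex.real_smul]
  exact mul_nonneg (by exact_mod_cast ha) (hM.dotProduct_mulVec_nonneg x)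

private lemma quad_cont {n : ℕ} (M : Matrix (Fin n) (Fin n) ℂ) :
    Continuous fun x : Fin n → ℂ => (star x ⬝ᵥ M *ᵥ x).re := by
  have h : (fun x : Fin n → ℂ => (star x ⬝ᵥ M *ᵥ x).re)
      = fun x => (∑ i, star (x i) * ∑ j, M i j * x j).re := by
    funext x; rfl
  rw [h]
  exact Complex.continuous_re.comp (continuous_finset_sum _ fun i _ =>
    ((continuous_star.comp (continuous_apply i)).mul
      (continuous_finset_sum _ fun j _ => continuous_const.mul (continuous_apply j))))

private lemma quad_smul {n : ℕ} (M : Matrix (Fin n) (Fin n) ℂ) (c : ℝ) (x : Fin n → ℂ) :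
    (star (c • x) ⬝ᵥ M *ᵥ (c • x)).re = c ^ 2 * (star x ⬝ᵥ M *ᵥ x).re := by
  rw [star_smul, mulVec_smul, smul_dotProduct, dotProduct_smul, star_trivial]
  rw [smul_smul, Complex.real_smul, Complex.re_ofReal_mul]
  ring

private lemma exists_eps {n : ℕ} (hn : 1 ≤ n) {P Q : Matrix (Fin n) (Fin n) ℂ}
    (hP : P.PosDef) (hQ : Q.IsHermitian) :
    ∃ ε : ℝ, 0 < ε ∧ (P + ε • Q).PosSemidef := by
  haveI : Nonempty (Fin n) := Fin.pos_iff_nonempty.mp hn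
  haveI : Nontrivial (Fin n → ℂ) := inferInstance
  have sph_ne : (Metric.sphere (0 : Fin n → ℂ) 1).Nonempty :=
    NormedSpace.sphere_nonempty.mpr zero_le_one
  have sph_cpt : IsCompact (Metric.sphere (0 : Fin n → ℂ) 1) := isCompact_sphere _ _
  obtain ⟨x0, hx0, hmin⟩ := sph_cpt.exists_isMinOn sph_ne (quad_cont P).continuousOn
  obtain ⟨x1, hx1, hmax⟩ := sph_cpt.exists_isMaxOn sph_ne ((quad_cont Q).abs).continuousOn
  set m : ℝ := (star x0 ⬝ᵥ P *ᵥ x0).re with hm_def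
  set C : ℝ := |(star x1 ⬝ᵥ Q *ᵥ x1).re| with hC_def
  have hx0ne : x0 ≠ 0 := by
    intro h; subst h; simp at hx0
  have hm : 0 < m := by
    have := hP.dotProduct_mulVec_pos hx0ne
    exact (Complex.lt_def.mp this).1
  have hC : 0 ≤ C := abs_nonneg _
  refine ⟨m / (C + 1), div_pos hm (by linarith), ?_⟩
  have hεC : m / (C + 1) * (C + 1) = m := div_mul_cancel₀ _ (by linarith)
  set ε : ℝ := m / (C + 1) with hε_def
  have hεpos : 0 < ε := div_pos hm (by linarith)
  refine posSemidef_of_re (hP.1.add (herm_smul ε hQ)) fun x => ?_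
  have expand : (star x ⬝ᵥ (P + ε • Q) *ᵥ x).re
      = (star x ⬝ᵥ P *ᵥ x).re + ε * (star x ⬝ᵥ Q *ᵥ x).re := by
    rw [add_mulVec, dotProduct_add, Complex.add_re, smul_mulVec,
      dotProduct_smul, Complex.real_smul, Complex.re_ofReal_mul]
  rw [expand]
  rcases eq_or_ne x 0 with rfl | hx
  · simp
  · set u : Fin n → ℂ := (‖x‖⁻¹ : ℝ) • x with hu_def
    have hnx : (0:ℝ) < ‖x‖ := norm_pos_iff.mpr hx
    have hu_sph : u ∈ Metric.sphere (0 : Fin n → ℂ) 1 := by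
      rw [mem_sphere_iff_norm, sub_zero, hu_def, norm_smul]
      simp [abs_of_pos (inv_pos.mpr hnx), inv_mul_cancel₀ (ne_of_gt hnx)]
    have hxu : x = (‖x‖ : ℝ) • u := by
      rw [hu_def, smul_smul, mul_inv_cancel₀ (ne_of_gt hnx), one_smul]
    have hgu : m ≤ (star u ⬝ᵥ P *ᵥ u).re := hmin hu_sph
    have hhu : |(star u ⬝ᵥ Q *ᵥ u).re| ≤ C := hmax hu_sph
    have habs : -C ≤ (star u ⬝ᵥ Q *ᵥ u).re := (abs_le.mp hhu).1
    have key : 0 ≤ (star u ⬝ᵥ P *ᵥ u).re + ε * (star u ⬝ᵥ Q *ᵥ u).re := by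
      nlinarith [mul_le_mul_of_nonneg_left habs (le_of_lt hεpos)]
    have e1 := quad_smul P ‖x‖ u
    have e2 := quad_smul Q ‖x‖ u
    rw [← hxu] at e1 e2
    rw [e1, e2]
    nlinarith [mul_nonneg (sq_nonneg ‖x‖) key]


/-- Lemma 4. If `x*` maximizes the Sion function over `Fκ` and lies on
the boundary of a composite constraint `f_γ` with positive definite quadratic part
(`f_γ(x*) = 0`, `A_γ ≻ 0`, `γ ≥ 0`), then `x*` satisfies every constraint:
`f_j(x*) ≥ 0` for all `j`. -/
theorem sion_maximizer_on_compact_boundary_is_feasible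
    (n : ℕ) (hn : 1 ≤ n) (J : Type) [Fintype J]
    (Ao : Matrix (Fin n) (Fin n) ℂ) (A : J → Matrix (Fin n) (Fin n) ℂ)
    (so : Fin n → ℂ) (s : J → Fin n → ℂ) (co : ℝ) (c : J → ℝ)
    (hAo : Ao.IsHermitian) (hA : ∀ j, (A j).IsHermitian)
    (fo : (Fin n → ℂ) → ℝ)
    (hfo : ∀ x, fo x = 2 * (star so ⬝ᵥ x).re - (star x ⬝ᵥ Ao.mulVec x).re + co)
    (f : J → (Fin n → ℂ) → ℝ)
    (hf : ∀ j x, f j x = 2 * (star (s j) ⬝ᵥ x).re - (star x ⬝ᵥ (A j).mulVec x).re + c j)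
    (L : (J → ℝ) → (Fin n → ℂ) → ℝ)
    (hL : ∀ φ x, L φ x = fo x + ∑ j, φ j * f j x)
    (Ψ : Set (J → ℝ))
    (hΨ : Ψ = {φ | (∀ j, 0 ≤ φ j) ∧ (Ao + ∑ j, φ j • A j).PosSemidef})
    (hΨne : Ψ.Nonempty)
    (κ : J → ℝ) (hκ : ∀ j, 0 ≤ κ j)
    (Fκ : Set (Fin n → ℂ))
    (hFκ : Fκ = {x | 0 ≤ ∑ j, κ j * f j x})
    (hFκne : Fκ.Nonempty) (hFκcpt : IsCompact Fκ)
    (S : (Fin n → ℂ) → EReal)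
    (hS : ∀ x, S x = ⨅ φ ∈ Ψ, (L φ x : EReal))
    (hFPne : {x : Fin n → ℂ | ∀ j, 0 ≤ f j x}.Nonempty)
    (xs : Fin n → ℂ) (hxs : xs ∈ Fκ)
    (hxsmax : ∀ x ∈ Fκ, S x ≤ S xs)
    (γ : J → ℝ) (hγ : ∀ j, 0 ≤ γ j)
    (hAγ : (∑ j, γ j • A j).PosDef)
    (hfγ : ∑ j, γ j * f j xs = 0) :
    ∀ j, 0 ≤ f j xs := by
  classical
  by_contra hcon
  push_neg at hcon
  obtain ⟨j0, hj0⟩ := hcon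
  obtain ⟨ψ, hψmem⟩ := hΨne
  rw [hΨ] at hψmem
  obtain ⟨hψ0, hψpsd⟩ := hψmem
  obtain ⟨ε, hεpos, hPQ⟩ := exists_eps hn hAγ (hA j0)
  -- feasible point
  obtain ⟨x0, hx0⟩ := hFPne
  have hx0Fκ : x0 ∈ Fκ := by
    rw [hFκ]
    exact Finset.sum_nonneg fun j _ => mul_nonneg (hκ j) (hx0 j)
  -- lower bound for S x0
  have hSx0 : (fo x0 : EReal) ≤ S x0 := by
    rw [hS x0]
    refine le_iInf₂ fun φ hφ => ?_
    rw [hΨ] at hφ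
    rw [EReal.coe_le_coe_iff, hL]
    have : 0 ≤ ∑ j, φ j * f j x0 :=
      Finset.sum_nonneg fun j _ => mul_nonneg (hφ.1 j) (hx0 j)
    linarith
  -- choose t
  set d : ℝ := ε * (-f j0 xs) with hd_def
  have hd : 0 < d := mul_pos hεpos (by linarith)
  set t : ℝ := max 0 ((L ψ xs - fo x0 + 1) / d) with ht_def
  have ht0 : 0 ≤ t := le_max_left _ _
  have htd : L ψ xs - fo x0 + 1 ≤ t * d := by
    have := le_max_right 0 ((L ψ xs - fo x0 + 1) / d)
    calc L ψ xs - fo x0 + 1 = (L ψ xs - fo x0 + 1) / d * d := (div_mul_cancel₀ _ (ne_of_gt hd)).symm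
      _ ≤ t * d := mul_le_mul_of_nonneg_right this (le_of_lt hd)
  -- the multiplier
  set φt : J → ℝ := fun j => ψ j + t * γ j + t * ε * (if j = j0 then 1 else 0) with hφt_def
  have hφtΨ : φt ∈ Ψ := by
    rw [hΨ]
    constructor
    · intro j
      have : (0:ℝ) ≤ t * ε * (if j = j0 then 1 else 0) := by
        apply mul_nonneg (mul_nonneg ht0 (le_of_lt hεpos))
        split <;> norm_num
      have h1 := hψ0 j
      have h2 := mul_nonneg ht0 (hγ j)
      simp only [hφt_def]
      linarith
    · have hsum : Ao + ∑ j, φt j • A j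
          = (Ao + ∑ j, ψ j • A j) + t • ((∑ j, γ j • A j) + ε • A j0) := by
        have e1 : ∀ j, φt j • A j = ψ j • A j + (t * γ j) • A j
            + (if j = j0 then (t * ε) • A j else 0) := by
          intro j
          simp only [hφt_def, add_smul, mul_ite, mul_one, mul_zero, ite_smul, zero_smul]
        rw [Finset.sum_congr rfl fun j _ => e1 j]
        rw [Finset.sum_add_distrib, Finset.sum_add_distrib, Finset.sum_ite_eq']
        simp only [Finset.mem_univ, if_true]
        have e2 : ∑ j, (t * γ j) • A j = t • ∑ j, γ j • A j := by
          rw [Finset.smul_sum]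
          exact Finset.sum_congr rfl fun j _ => by rw [smul_smul]
        rw [e2, smul_add, smul_smul]
        abel
      rw [hsum]
      exact psd_add hψpsd (psd_smul ht0 hPQ)
  -- value of L φt xs
  have hLφt : L φt xs = L ψ xs + t * ε * f j0 xs := by
    rw [hL, hL]
    have : ∑ j, φt j * f j xs
        = ∑ j, ψ j * f j xs + t * ∑ j, γ j * f j xs + t * ε * f j0 xs := by
      have e1 : ∀ j, φt j * f j xs = ψ j * f j xs + t * (γ j * f j xs)
          + (if j = j0 then t * ε * f j xs else 0) := by
        intro j
        simp only [hφt_def]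
        split <;> ring
      rw [Finset.sum_congr rfl fun j _ => e1 j]
      rw [Finset.sum_add_distrib, Finset.sum_add_distrib, Finset.sum_ite_eq']
      simp only [Finset.mem_univ, if_true, ← Finset.mul_sum]
    rw [this, hfγ]
    ring
  -- S xs ≤ L φt xs
  have hSxs : S xs ≤ ((L φt xs : ℝ) : EReal) := by
    rw [hS xs]
    exact iInf₂_le φt hφtΨ
  -- contradiction
  have hchain : (fo x0 : EReal) ≤ ((L φt xs : ℝ) : EReal) :=
    le_trans hSx0 (le_trans (hxsmax x0 hx0Fκ) hSxs)
  rw [EReal.coe_le_coe_iff] at hchain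
  have : L φt xs < fo x0 := by
    rw [hLφt]
    have : t * ε * f j0 xs = -(t * d) := by rw [hd_def]; ring
    rw [this]
    linarith
  linarith
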